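/- Let (A, A*) be a tridiagonal pair on V with eigenspace orderings V_0, ..., V_d of A and V*_0, ..., V*_d of A*, and assume d ≥ 1. Let D denote the subalgebra of End(V) generated by A. Then for X ∈ End(V) the following are equivalent: (i) X ∈ D and X V*_0 ⊆ V*_0 + V*_1; (ii) there exist scalars r, s ∈ K such that X = rA + sI. -/

import Mathlib

open Polynomial

/-- A tridiagonal pair on `V`, with eigenspace orderings `Ev 0, ..., Ev d` of `A`
(with eigenvalues `θ 0, ..., θ d`) and `Ew 0, ..., Ew d` of `B = A*`
(with eigenvalues `θ' 0, ..., θ' d`).  For indices `i > d` we set `Ev i = ⊥`,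
`Ew i = ⊥`, encoding the conventions `V_{-1} = 0`, `V_{d+1} = 0`
(note `Ev (0 - 1) = Ev 0` by truncated subtraction, which is harmless in the
tridiagonal conditions below since `Ev i` appears in the sum anyway). -/
structure TridiagonalPair (K V : Type*) [Field K] [AddCommGroup V] [Module K V]
    [FiniteDimensional K V] where
  A : Module.End K V
  B : Module.End K V
  d : ℕ
  Ev : ℕ → Submodule K V
  Ew : ℕ → Submodule K V
  θ : ℕ → K
  θ' : ℕ → K
  hEv_eig : ∀ i ≤ d, Ev i = Module.End.eigenspace A (θ i)
  hEv_ne : ∀ i ≤ d, Ev i ≠ ⊥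
  hEv_all : ∀ μ : K, Module.End.eigenspace A μ ≠ ⊥ → ∃ i ≤ d, θ i = μ
  hθ_inj : ∀ i ≤ d, ∀ j ≤ d, θ i = θ j → i = j
  hEv_top : (⨆ i ∈ Finset.range (d + 1), Ev i) = ⊤
  hEv_bot : ∀ i, d < i → Ev i = ⊥
  hEw_eig : ∀ i ≤ d, Ew i = Module.End.eigenspace B (θ' i)
  hEw_ne : ∀ i ≤ d, Ew i ≠ ⊥
  hEw_all : ∀ μ : K, Module.End.eigenspace B μ ≠ ⊥ → ∃ i ≤ d, θ' i = μ
  hθ'_inj : ∀ i ≤ d, ∀ j ≤ d, θ' i = θ' j → i = j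
  hEw_top : (⨆ i ∈ Finset.range (d + 1), Ew i) = ⊤
  hEw_bot : ∀ i, d < i → Ew i = ⊥
  hTriB : ∀ i ≤ d, ∀ v ∈ Ev i, B v ∈ Ev (i - 1) ⊔ Ev i ⊔ Ev (i + 1)
  hTriA : ∀ i ≤ d, ∀ v ∈ Ew i, A v ∈ Ew (i - 1) ⊔ Ew i ⊔ Ew (i + 1)
  hIrr : ∀ W : Submodule K V, (∀ v ∈ W, A v ∈ W) → (∀ v ∈ W, B v ∈ W) →
    W = ⊥ ∨ W = ⊤

/-- The polynomial `τ_i = (λ - θ_0)(λ - θ_1) ⋯ (λ - θ_{i-1})`. -/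
noncomputable def tau {K : Type*} [Field K] (θ : ℕ → K) (i : ℕ) : Polynomial K :=
  ∏ k ∈ Finset.range i, (X - C (θ k))

namespace TDPaux

variable {K V : Type*} [Field K] [AddCommGroup V] [Module K V]
  [FiniteDimensional K V] (p : TridiagonalPair K V)

/-- The flag `F i = V*_0 + ⋯ + V*_i`. -/
def Fl (i : ℕ) : Submodule K V := ⨆ j, ⨆ _ : j ≤ i, p.Ew j

/-- The flag `G⁺ i = V_i + ⋯ + V_d`. -/
def Gp (i : ℕ) : Submodule K V := ⨆ j, ⨆ _ : i ≤ j, p.Ev j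

/-- The flag `G⁻ i = V_0 + ⋯ + V_{d-i}`. -/
def Gm (i : ℕ) : Submodule K V := ⨆ j, ⨆ _ : j + i ≤ p.d, p.Ev j

lemma Ew_le_Fl {j i : ℕ} (h : j ≤ i) : p.Ew j ≤ Fl p i :=
  le_iSup_of_le j (le_iSup_of_le h le_rfl)

lemma Fl_mono {i i' : ℕ} (h : i ≤ i') : Fl p i ≤ Fl p i' :=
  iSup₂_le fun j hj => Ew_le_Fl p (hj.trans h)

lemma Fl_zero_le : Fl p 0 ≤ p.Ew 0 :=
  iSup₂_le fun j hj => by rw [Nat.le_zero.mp hj]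

lemma Ev_le_Gp {i j : ℕ} (h : i ≤ j) : p.Ev j ≤ Gp p i :=
  le_iSup_of_le j (le_iSup_of_le h le_rfl)

lemma Ev_le_Gm {i j : ℕ} (h : j + i ≤ p.d) : p.Ev j ≤ Gm p i :=
  le_iSup_of_le j (le_iSup_of_le h le_rfl)

lemma Gp_top : (⊤ : Submodule K V) ≤ Gp p 0 := by
  rw [← p.hEv_top]
  exact iSup₂_le fun j _ => Ev_le_Gp p (Nat.zero_le j)

lemma Gm_top : (⊤ : Submodule K V) ≤ Gm p 0 := by
  rw [← p.hEv_top]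
  exact iSup₂_le fun j hj => Ev_le_Gm p (by simpa using Nat.lt_succ_iff.mp (Finset.mem_range.mp hj))

lemma Gp_anti {i i' : ℕ} (h : i ≤ i') : Gp p i' ≤ Gp p i :=
  iSup₂_le fun j hj => Ev_le_Gp p (h.trans hj)

lemma Gm_anti {i i' : ℕ} (h : i ≤ i') : Gm p i' ≤ Gm p i :=
  iSup₂_le fun j hj => Ev_le_Gm p (by omega)

lemma A_Fl {i : ℕ} {v : V} (hv : v ∈ Fl p i) : p.A v ∈ Fl p (i + 1) := by
  have : Submodule.map p.A (Fl p i) ≤ Fl p (i + 1) := by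
    simp only [Fl, Submodule.map_iSup]
    refine iSup_le fun j => iSup_le fun hj => ?_
    rw [Submodule.map_le_iff_le_comap]
    intro v hv
    rw [Submodule.mem_comap]
    show p.A v ∈ Fl p (i + 1)
    by_cases hjd : j ≤ p.d
    · have := p.hTriA j hjd v hv
      refine SetLike.le_def.mp ?_ this
      exact sup_le (sup_le (Ew_le_Fl p (by omega)) (Ew_le_Fl p (by omega)))
        (Ew_le_Fl p (by omega))
    · rw [p.hEw_bot j (by omega)] at hv
      simp only [Submodule.mem_bot] at hv
      subst hv
      simp only [Submodule.mem_comap, map_zero]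
      exact zero_mem _
  exact this (Submodule.mem_map_of_mem hv)

lemma B_Fl {i : ℕ} {v : V} (hv : v ∈ Fl p (i + 1)) :
    p.B v - p.θ' (i + 1) • v ∈ Fl p i := by
  have : Submodule.map (p.B - p.θ' (i + 1) • (1 : Module.End K V)) (Fl p (i + 1)) ≤ Fl p i := by
    simp only [Fl, Submodule.map_iSup]
    refine iSup_le fun j => iSup_le fun hj => ?_
    rw [Submodule.map_le_iff_le_comap]
    intro v hv
    by_cases hjd : j ≤ p.d
    · have hBv : p.B v = p.θ' j • v := by
        have := p.hEw_eig j hjd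
        rw [this] at hv
        exact Module.End.mem_eigenspace_iff.mp hv
      have : (p.B - p.θ' (i + 1) • (1 : Module.End K V)) v = (p.θ' j - p.θ' (i + 1)) • v := by
        simp [LinearMap.sub_apply, LinearMap.smul_apply, hBv, sub_smul]
      rw [Submodule.mem_comap, this]
      show _ ∈ Fl p i
      rcases Nat.lt_or_ge j (i + 1) with hji | hji
      · exact Submodule.smul_mem _ _ (Ew_le_Fl p (by omega) hv)
      · have : j = i + 1 := by omega
        subst this
        simp
    · rw [p.hEw_bot j (by omega)] at hv
      simp only [Submodule.mem_bot] at hv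
      subst hv
      simp only [Submodule.mem_comap, map_zero]
      exact zero_mem _
  have h2 := this (Submodule.mem_map_of_mem hv)
  simpa [LinearMap.sub_apply, LinearMap.smul_apply] using h2

lemma pow_Fl {i : ℕ} (n : ℕ) {v : V} (hv : v ∈ Fl p i) : (p.A ^ n) v ∈ Fl p (i + n) := by
  induction n with
  | zero => simpa using hv
  | succ k ih =>
    rw [pow_succ', Module.End.mul_apply]
    exact A_Fl p ih

lemma aeval_Fl (q : K[X]) (n : ℕ) (hq : q.natDegree ≤ n) {i : ℕ} {v : V}
    (hv : v ∈ Fl p i) : (Polynomial.aeval p.A q) v ∈ Fl p (i + n) := by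
  rw [Polynomial.aeval_eq_sum_range' (Nat.lt_succ_of_le hq)]
  rw [LinearMap.coe_sum, Finset.sum_apply]
  refine Submodule.sum_mem _ fun k hk => ?_
  have hk' := Finset.mem_range.mp hk
  rw [LinearMap.smul_apply]
  refine Submodule.smul_mem _ _ ?_
  exact Fl_mono p (by omega) (pow_Fl p k hv)

lemma Gp_A (i : ℕ) {v : V} (hv : v ∈ Gp p i) : p.A v - p.θ i • v ∈ Gp p (i + 1) := by
  have : Submodule.map (p.A - p.θ i • (1 : Module.End K V)) (Gp p i) ≤ Gp p (i + 1) := by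
    simp only [Gp, Submodule.map_iSup]
    refine iSup_le fun j => iSup_le fun hj => ?_
    rw [Submodule.map_le_iff_le_comap]
    intro v hv
    by_cases hjd : j ≤ p.d
    · have hAv : p.A v = p.θ j • v := by
        have := p.hEv_eig j hjd
        rw [this] at hv
        exact Module.End.mem_eigenspace_iff.mp hv
      have heq : (p.A - p.θ i • (1 : Module.End K V)) v = (p.θ j - p.θ i) • v := by
        simp [LinearMap.sub_apply, LinearMap.smul_apply, hAv, sub_smul]
      rw [Submodule.mem_comap, heq]
      show _ ∈ Gp p (i + 1)
      rcases eq_or_lt_of_le hj with hji | hji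
      · subst hji; simp
      · exact Submodule.smul_mem _ _ (Ev_le_Gp p (by omega) hv)
    · rw [p.hEv_bot j (by omega)] at hv
      simp only [Submodule.mem_bot] at hv
      subst hv
      simp only [Submodule.mem_comap, map_zero]
      exact zero_mem _
  have h2 := this (Submodule.mem_map_of_mem hv)
  simpa [LinearMap.sub_apply, LinearMap.smul_apply] using h2

lemma Gp_B (i : ℕ) {v : V} (hv : v ∈ Gp p (i + 1)) : p.B v ∈ Gp p i := by
  have : Submodule.map p.B (Gp p (i + 1)) ≤ Gp p i := by
    simp only [Gp, Submodule.map_iSup]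
    refine iSup_le fun j => iSup_le fun hj => ?_
    rw [Submodule.map_le_iff_le_comap]
    intro v hv
    rw [Submodule.mem_comap]
    show p.B v ∈ Gp p i
    by_cases hjd : j ≤ p.d
    · have := p.hTriB j hjd v hv
      refine SetLike.le_def.mp ?_ this
      exact sup_le (sup_le (Ev_le_Gp p (by omega)) (Ev_le_Gp p (by omega)))
        (Ev_le_Gp p (by omega))
    · rw [p.hEv_bot j (by omega)] at hv
      simp only [Submodule.mem_bot] at hv
      subst hv
      simp only [Submodule.mem_comap, map_zero]
      exact zero_mem _
  exact this (Submodule.mem_map_of_mem hv)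

lemma Gm_A (i : ℕ) {v : V} (hv : v ∈ Gm p i) : p.A v - p.θ (p.d - i) • v ∈ Gm p (i + 1) := by
  have : Submodule.map (p.A - p.θ (p.d - i) • (1 : Module.End K V)) (Gm p i) ≤ Gm p (i + 1) := by
    simp only [Gm, Submodule.map_iSup]
    refine iSup_le fun j => iSup_le fun hj => ?_
    rw [Submodule.map_le_iff_le_comap]
    intro v hv
    have hjd : j ≤ p.d := by omega
    have hAv : p.A v = p.θ j • v := by
      have := p.hEv_eig j hjd
      rw [this] at hv
      exact Module.End.mem_eigenspace_iff.mp hv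
    have heq : (p.A - p.θ (p.d - i) • (1 : Module.End K V)) v = (p.θ j - p.θ (p.d - i)) • v := by
      simp [LinearMap.sub_apply, LinearMap.smul_apply, hAv, sub_smul]
    rw [Submodule.mem_comap, heq]
    show _ ∈ Gm p (i + 1)
    by_cases hji : j = p.d - i
    · subst hji; simp
    · exact Submodule.smul_mem _ _ (Ev_le_Gm p (by omega) hv)
  have h2 := this (Submodule.mem_map_of_mem hv)
  simpa [LinearMap.sub_apply, LinearMap.smul_apply] using h2

lemma Gm_B (i : ℕ) {v : V} (hv : v ∈ Gm p (i + 1)) : p.B v ∈ Gm p i := by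
  have : Submodule.map p.B (Gm p (i + 1)) ≤ Gm p i := by
    simp only [Gm, Submodule.map_iSup]
    refine iSup_le fun j => iSup_le fun hj => ?_
    rw [Submodule.map_le_iff_le_comap]
    intro v hv
    rw [Submodule.mem_comap]
    show p.B v ∈ Gm p i
    have hjd : j ≤ p.d := by omega
    have := p.hTriB j hjd v hv
    refine SetLike.le_def.mp ?_ this
    exact sup_le (sup_le (Ev_le_Gm p (by omega)) (Ev_le_Gm p (by omega)))
      (Ev_le_Gm p (by omega))
  exact this (Submodule.mem_map_of_mem hv)

/-- Generic split-decomposition lemma. -/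
lemma split (H : ℕ → Submodule K V) (σ : ℕ → K)
    (h0 : (⊤ : Submodule K V) ≤ H 0) (hmono : ∀ i, H (i + 1) ≤ H i)
    (hA : ∀ i, ∀ v ∈ H i, p.A v - σ i • v ∈ H (i + 1))
    (hB : ∀ i, ∀ v ∈ H (i + 1), p.B v ∈ H i) :
    (⨆ i, Fl p i ⊓ H i) = ⊤ := by
  set U := ⨆ i, Fl p i ⊓ H i with hU
  have hle : ∀ i, Fl p i ⊓ H i ≤ U := fun i => by rw [hU]; exact le_iSup (fun i => Fl p i ⊓ H i) i
  have hAinv : ∀ v ∈ U, p.A v ∈ U := by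
    intro v hv
    rw [hU] at hv
    refine Submodule.iSup_induction (motive := fun x => p.A x ∈ U) _ hv (fun i x hx => ?_)
      (by show p.A 0 ∈ U; rw [map_zero]; exact zero_mem U)
      (fun x y hx hy => by show p.A (x + y) ∈ U; rw [map_add]; exact add_mem hx hy)
    obtain ⟨hx1, hx2⟩ := Submodule.mem_inf.mp hx
    have h1 : p.A x - σ i • x ∈ Fl p (i + 1) ⊓ H (i + 1) := by
      refine Submodule.mem_inf.mpr ⟨?_, hA i x hx2⟩
      exact sub_mem (A_Fl p hx1) (Submodule.smul_mem _ _ (Fl_mono p (Nat.le_succ i) hx1))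
    have heq : p.A x = (p.A x - σ i • x) + σ i • x := (sub_add_cancel _ _).symm
    rw [heq]
    exact add_mem (hle _ h1) (Submodule.smul_mem _ _ (hle i hx))
  have hBinv : ∀ v ∈ U, p.B v ∈ U := by
    intro v hv
    rw [hU] at hv
    refine Submodule.iSup_induction (motive := fun x => p.B x ∈ U) _ hv (fun i x hx => ?_)
      (by show p.B 0 ∈ U; rw [map_zero]; exact zero_mem U)
      (fun x y hx hy => by show p.B (x + y) ∈ U; rw [map_add]; exact add_mem hx hy)
    obtain ⟨hx1, hx2⟩ := Submodule.mem_inf.mp hx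
    cases i with
    | zero =>
      have hx0 : x ∈ p.Ew 0 := Fl_zero_le p hx1
      have hBx : p.B x = p.θ' 0 • x := by
        have := p.hEw_eig 0 (Nat.zero_le _)
        rw [this] at hx0
        exact Module.End.mem_eigenspace_iff.mp hx0
      rw [hBx]
      exact Submodule.smul_mem _ _ (hle 0 hx)
    | succ k =>
      have h1 : p.B x - p.θ' (k + 1) • x ∈ Fl p k ⊓ H k := by
        refine Submodule.mem_inf.mpr ⟨B_Fl p hx1, ?_⟩
        exact sub_mem (hB k x hx2) (Submodule.smul_mem _ _ (hmono k hx2))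
      have heq : p.B x = (p.B x - p.θ' (k + 1) • x) + p.θ' (k + 1) • x :=
        (sub_add_cancel _ _).symm
      rw [heq]
      exact add_mem (hle _ h1) (Submodule.smul_mem _ _ (hle (k + 1) hx))
  rcases p.hIrr U hAinv hBinv with h | h
  · exfalso
    have : p.Ew 0 ≤ U := le_trans (le_inf (Ew_le_Fl p le_rfl) (le_trans le_top h0)) (hle 0)
    rw [h] at this
    exact p.hEw_ne 0 (Nat.zero_le _) (le_bot_iff.mp this)
  · exact h

lemma tau_monic (θ : ℕ → K) (n : ℕ) : (tau θ n).Monic :=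
  monic_prod_of_monic _ _ fun k _ => monic_X_sub_C _

lemma tau_natDegree (θ : ℕ → K) (n : ℕ) : (tau θ n).natDegree = n := by
  rw [tau, Polynomial.natDegree_prod_of_monic _ _ fun k _ => monic_X_sub_C _]
  simp

lemma tau_kill {j n : ℕ} (hj : j ≤ p.d) (hjn : j < n) {v : V} (hv : v ∈ p.Ev j) :
    (Polynomial.aeval p.A (tau p.θ n)) v = 0 := by
  have hfac : tau p.θ n =
      (∏ k ∈ (Finset.range n).erase j, (X - C (p.θ k))) * (X - C (p.θ j)) :=
    (Finset.prod_erase_mul _ _ (Finset.mem_range.mpr hjn)).symm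
  have hAv : p.A v = p.θ j • v := by
    have := p.hEv_eig j hj
    rw [this] at hv
    exact Module.End.mem_eigenspace_iff.mp hv
  rw [hfac, map_mul, Module.End.mul_apply]
  have : (Polynomial.aeval p.A (X - C (p.θ j))) v = 0 := by
    rw [map_sub, Polynomial.aeval_X, Polynomial.aeval_C, LinearMap.sub_apply,
      Module.algebraMap_end_apply, hAv, sub_self]
  rw [this, map_zero]

lemma tau_eig_top (n : ℕ) {v : V} (hv : v ∈ p.Ev p.d) :
    (Polynomial.aeval p.A (tau p.θ n)) v = (∏ k ∈ Finset.range n, (p.θ p.d - p.θ k)) • v := by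
  have hAv : p.A v = p.θ p.d • v := by
    have := p.hEv_eig p.d le_rfl
    rw [this] at hv
    exact Module.End.mem_eigenspace_iff.mp hv
  induction n with
  | zero => simp [tau]
  | succ m ih =>
    have hfac : tau p.θ (m + 1) = tau p.θ m * (X - C (p.θ m)) := by
      rw [tau, tau, Finset.prod_range_succ]
    rw [hfac, map_mul, Module.End.mul_apply]
    have h1 : (Polynomial.aeval p.A (X - C (p.θ m))) v = (p.θ p.d - p.θ m) • v := by
      rw [map_sub, Polynomial.aeval_X, Polynomial.aeval_C, LinearMap.sub_apply,
        Module.algebraMap_end_apply, hAv, sub_smul]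
    rw [h1, map_smul, ih, Finset.prod_range_succ, smul_smul, mul_comm]

lemma minpoly_kill : Polynomial.aeval p.A (tau p.θ (p.d + 1)) = 0 := by
  have hmap : Submodule.map (Polynomial.aeval p.A (tau p.θ (p.d + 1)))
      (⊤ : Submodule K V) ≤ ⊥ := by
    rw [← p.hEv_top]
    simp only [Submodule.map_iSup]
    refine iSup_le fun j => iSup_le fun hj => ?_
    rw [Submodule.map_le_iff_le_comap]
    intro v hv
    have hjd : j ≤ p.d := Nat.lt_succ_iff.mp (Finset.mem_range.mp hj)
    simp only [Submodule.mem_comap, Submodule.mem_bot]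
    exact tau_kill p hjd (Nat.lt_succ_of_le hjd) hv
  apply LinearMap.ext
  intro v
  have := hmap (Submodule.mem_map_of_mem (Submodule.mem_top : v ∈ ⊤))
  simpa using this

end TDPaux

open TDPaux

/-- Assume `d ≥ 1`.  For `X ∈ End(V)` the following are equivalent:
(i) `X ∈ D` and `X V*_0 ⊆ V*_0 + V*_1`;
(ii) there exist `r, s ∈ K` with `X = r A + s I`. -/
theorem stmt6 {K V : Type*} [Field K] [AddCommGroup V] [Module K V]
    [FiniteDimensional K V] (hpos : 0 < Module.finrank K V)
    (p : TridiagonalPair K V)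
    (hd : 1 ≤ p.d) (X : Module.End K V) :
    (X ∈ Algebra.adjoin K {p.A} ∧ ∀ v ∈ p.Ew 0, X v ∈ p.Ew 0 ⊔ p.Ew 1) ↔
    (∃ r s : K, X = r • p.A + s • (1 : Module.End K V)) := by
  constructor
  · rintro ⟨hXD, hX0⟩
    rw [Algebra.adjoin_singleton_eq_range_aeval, AlgHom.mem_range] at hXD
    obtain ⟨f, hf⟩ := hXD
    set m : K[X] := tau p.θ (p.d + 1) with hm_def
    have hm : m.Monic := tau_monic p.θ (p.d + 1)
    have hmA : Polynomial.aeval p.A m = 0 := minpoly_kill p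
    set h : K[X] := f %ₘ m with hh_def
    have hXh : Polynomial.aeval p.A h = X := by
      have hmod := Polynomial.modByMonic_add_div f m
      calc Polynomial.aeval p.A h
          = Polynomial.aeval p.A (h + m * (f /ₘ m)) := by
            rw [map_add, map_mul, hmA, zero_mul, add_zero]
        _ = Polynomial.aeval p.A f := by rw [hmod]
        _ = X := hf
    have hdeg : h.natDegree ≤ p.d := by
      have h1 : h.natDegree < m.natDegree := by
        refine Polynomial.natDegree_modByMonic_lt f hm ?_
        intro hcon
        have := tau_natDegree p.θ (p.d + 1)
        rw [← hm_def, hcon] at this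
        simp at this
      have h2 : m.natDegree = p.d + 1 := tau_natDegree p.θ (p.d + 1)
      omega
    by_cases he : h.natDegree ≤ 1
    · refine ⟨h.coeff 1, h.coeff 0, ?_⟩
      rw [← hXh, Polynomial.aeval_eq_sum_range' (n := 2) (by omega)]
      rw [Finset.sum_range_succ, Finset.sum_range_succ, Finset.sum_range_zero]
      simp only [pow_zero, pow_one, zero_add]
      abel
    · exfalso
      set e := h.natDegree with he_def
      have h2e : 2 ≤ e := by omega
      have hed : e ≤ p.d := hdeg
      have hh0 : h ≠ 0 := by
        intro hcon
        rw [he_def, hcon, Polynomial.natDegree_zero] at h2e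
        omega
      have hc : h.coeff e ≠ 0 := by
        rw [he_def]
        exact Polynomial.leadingCoeff_ne_zero.mpr hh0
      set r : K[X] := h - C (h.coeff e) * tau p.θ e with hr_def
      have hrd : r.natDegree ≤ e - 1 := by
        have hre : r.natDegree ≤ e := by
          refine le_trans (Polynomial.natDegree_sub_le _ _) (max_le le_rfl ?_)
          refine le_trans (Polynomial.natDegree_C_mul_le _ _) ?_
          rw [tau_natDegree]
        have hce : r.coeff e = 0 := by
          have htc : (tau p.θ e).coeff e = 1 := by
            have := (tau_monic p.θ e).coeff_natDegree
            rwa [tau_natDegree] at this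
          rw [hr_def, Polynomial.coeff_sub, Polynomial.coeff_C_mul, htc, mul_one, sub_self]
        by_cases hr0 : r = 0
        · rw [hr0]; simp
        · have hne : r.natDegree ≠ e := by
            intro hEq
            apply hr0
            apply Polynomial.leadingCoeff_eq_zero.mp
            rw [Polynomial.leadingCoeff, hEq]
            exact hce
          omega
      have step1 : ∀ v ∈ p.Ew 0, (Polynomial.aeval p.A (tau p.θ e)) v ∈ Fl p (e - 1) := by
        intro v hv
        have hhv : (Polynomial.aeval p.A h) v ∈ Fl p (e - 1) := by
          rw [hXh]
          have := hX0 v hv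
          refine SetLike.le_def.mp ?_ this
          exact sup_le (Ew_le_Fl p (by omega)) (Ew_le_Fl p (by omega))
        have hrv : (Polynomial.aeval p.A r) v ∈ Fl p (e - 1) := by
          have := aeval_Fl p r (e - 1) hrd (Ew_le_Fl p le_rfl hv)
          simpa using this
        have hdecomp : h = C (h.coeff e) * tau p.θ e + r := by rw [hr_def]; ring
        have key : (Polynomial.aeval p.A h) v =
            h.coeff e • (Polynomial.aeval p.A (tau p.θ e)) v + (Polynomial.aeval p.A r) v := by
          conv_lhs => rw [hdecomp]
          rw [map_add, map_mul, Polynomial.aeval_C, LinearMap.add_apply, Module.End.mul_apply,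
            Module.algebraMap_end_apply]
        have heq : (Polynomial.aeval p.A (tau p.θ e)) v =
            (h.coeff e)⁻¹ • ((Polynomial.aeval p.A h) v - (Polynomial.aeval p.A r) v) := by
          rw [key, add_sub_cancel_right, smul_smul, inv_mul_cancel₀ hc, one_smul]
        rw [heq]
        exact Submodule.smul_mem _ _ (sub_mem hhv hrv)
      have step2 : ∀ v ∈ p.Ew 0, (Polynomial.aeval p.A (tau p.θ p.d)) v ∈ Fl p (p.d - 1) := by
        intro v hv
        have h1 : tau p.θ e * (∏ k ∈ Finset.Ico e p.d, (Polynomial.X - C (p.θ k)))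
            = tau p.θ p.d := Finset.prod_range_mul_prod_Ico _ hed
        have htaud : tau p.θ p.d
            = (∏ k ∈ Finset.Ico e p.d, (Polynomial.X - C (p.θ k))) * tau p.θ e := by
          rw [← h1]; ring
        rw [htaud, map_mul, Module.End.mul_apply]
        have hq : (∏ k ∈ Finset.Ico e p.d, (Polynomial.X - C (p.θ k))).natDegree ≤ p.d - e := by
          refine le_trans (Polynomial.natDegree_prod_le _ _) ?_
          simp [Polynomial.natDegree_X_sub_C]
        have := aeval_Fl p _ (p.d - e) hq (step1 v hv)
        have harith : e - 1 + (p.d - e) = p.d - 1 := by omega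
        rwa [harith] at this
      -- Second split decomposition: τ_d(A) V ⊆ F (d-1), hence Ev d ≤ F (d-1)
      have hsplitm : (⨆ i, Fl p i ⊓ Gm p i) = ⊤ :=
        split p (Gm p) (fun i => p.θ (p.d - i)) (Gm_top p) (fun i => Gm_anti p (Nat.le_succ i))
          (fun i v hv => Gm_A p i hv) (fun i v hv => Gm_B p i hv)
      have hkillmap : Submodule.map (Polynomial.aeval p.A (tau p.θ p.d)) (Gm p 1) ≤ ⊥ := by
        simp only [Gm, Submodule.map_iSup]
        refine iSup_le fun j => iSup_le fun hj => ?_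
        rw [Submodule.map_le_iff_le_comap]
        intro v hv
        simp only [Submodule.mem_comap, Submodule.mem_bot]
        exact tau_kill p (by omega) (by omega) hv
      have htop : ∀ v : V, (Polynomial.aeval p.A (tau p.θ p.d)) v ∈ Fl p (p.d - 1) := by
        intro v
        have hv : v ∈ ⨆ i, Fl p i ⊓ Gm p i := by rw [hsplitm]; trivial
        refine Submodule.iSup_induction
          (motive := fun x => (Polynomial.aeval p.A (tau p.θ p.d)) x ∈ Fl p (p.d - 1)) _ hv
          (fun i x hx => ?_)
          (by show (Polynomial.aeval p.A (tau p.θ p.d)) 0 ∈ Fl p (p.d - 1)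
              rw [map_zero]; exact zero_mem _)
          (fun x y hx hy => by
            show (Polynomial.aeval p.A (tau p.θ p.d)) (x + y) ∈ Fl p (p.d - 1)
            rw [map_add]; exact add_mem hx hy)
        obtain ⟨hx1, hx2⟩ := Submodule.mem_inf.mp hx
        cases i with
        | zero => exact step2 x (Fl_zero_le p hx1)
        | succ k =>
          have hg : x ∈ Gm p 1 := Gm_anti p (by omega) hx2
          have : (Polynomial.aeval p.A (tau p.θ p.d)) x = 0 := by
            have := hkillmap (Submodule.mem_map_of_mem hg)
            simpa using this
          rw [this]
          exact zero_mem _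
      have step3 : p.Ev p.d ≤ Fl p (p.d - 1) := by
        intro v hv
        have heig := tau_eig_top p p.d hv
        have hc0 : (∏ k ∈ Finset.range p.d, (p.θ p.d - p.θ k)) ≠ 0 := by
          refine Finset.prod_ne_zero_iff.mpr fun k hk => ?_
          have hk' : k < p.d := Finset.mem_range.mp hk
          refine sub_ne_zero_of_ne fun hEq => ?_
          have := p.hθ_inj p.d le_rfl k (by omega) hEq
          omega
        have hveq : v = (∏ k ∈ Finset.range p.d, (p.θ p.d - p.θ k))⁻¹ •
            (Polynomial.aeval p.A (tau p.θ p.d)) v := by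
          rw [heig, smul_smul, inv_mul_cancel₀ hc0, one_smul]
        rw [hveq]
        exact Submodule.smul_mem _ _ (htop v)
      -- First split decomposition: everything lands in F (d-1)
      have hsplitp : (⨆ i, Fl p i ⊓ Gp p i) = ⊤ :=
        split p (Gp p) p.θ (Gp_top p) (fun i => Gp_anti p (Nat.le_succ i))
          (fun i v hv => Gp_A p i hv) (fun i v hv => Gp_B p i hv)
      have step4 : (⊤ : Submodule K V) ≤ Fl p (p.d - 1) := by
        rw [← hsplitp]
        refine iSup_le fun i => ?_
        rcases le_or_gt i (p.d - 1) with hi | hi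
        · exact le_trans inf_le_left (Fl_mono p hi)
        · refine le_trans inf_le_right ?_
          refine iSup₂_le fun j hj => ?_
          rcases eq_or_lt_of_le (show p.d ≤ j by omega) with hjd | hjd
          · rw [← hjd]; exact step3
          · rw [p.hEv_bot j hjd]; exact bot_le
      -- contradiction with independence of the eigenspaces of B
      have hEwd : p.Ew p.d ≤ Fl p (p.d - 1) := le_trans le_top step4
      have hind := Module.End.eigenspaces_iSupIndep p.B (p.θ' p.d)
      have h1 : p.Ew p.d ≤ Module.End.eigenspace p.B (p.θ' p.d) := (p.hEw_eig p.d le_rfl).le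
      have h2 : Fl p (p.d - 1) ≤ ⨆ μ, ⨆ _ : μ ≠ p.θ' p.d, Module.End.eigenspace p.B μ := by
        refine iSup₂_le fun j hj => ?_
        have hjd : j ≤ p.d := by omega
        rw [p.hEw_eig j hjd]
        refine le_iSup_of_le (p.θ' j) (le_iSup_of_le ?_ le_rfl)
        intro hEq
        have := p.hθ'_inj j hjd p.d le_rfl hEq
        omega
      have hbot : p.Ew p.d = ⊥ := by
        have hdisj : Disjoint (p.Ew p.d) (p.Ew p.d) :=
          Disjoint.mono h1 (le_trans hEwd h2) hind
        exact disjoint_self.mp hdisj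
      exact p.hEw_ne p.d le_rfl hbot
  · rintro ⟨r, s, rfl⟩
    constructor
    · refine add_mem (Subalgebra.smul_mem _ (Algebra.self_mem_adjoin_singleton K p.A) r)
        (Subalgebra.smul_mem _ (Subalgebra.one_mem _) s)
    · intro v hv
      have hAv : p.A v ∈ p.Ew 0 ⊔ p.Ew 1 := by
        have := p.hTriA 0 (Nat.zero_le _) v hv
        simpa [sup_assoc, sup_idem] using this
      have : (r • p.A + s • (1 : Module.End K V)) v = r • p.A v + s • v := by
        simp [LinearMap.add_apply, LinearMap.smul_apply]
      rw [this]
      exact add_mem (Submodule.smul_mem _ _ hAv)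
        (Submodule.smul_mem _ _ (le_sup_left (a := p.Ew 0) (b := p.Ew 1) hv))
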